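/- Let p ≥ 1 and C > 0, and define ĥ(t) := t e^{−2 t^{-1/(2p)}} for t > 0, ĥ(0) := 0. Then there exists a constant D > 0, depending only on p and C, with the following property: for every ε > 0 satisfying 1 ≥ (−ln(C ε^{2/3}))^{-2p} ≥ ε and every Borel probability measure μ on (0,1] such that ∫₀¹ ĥ((1 − ln λ)^{-2p}) dμ(λ) = C ε², one has ∫₀¹ (1 − ln λ)^{-2p} dμ(λ) ≤ D (−ln(ε^{2/3}))^{-2p}. -/

import Mathlib

open MeasureTheory

private lemma aux_rpow_le_factorial_mul_exp (q : ℝ) (hq : 0 ≤ q) {x : ℝ} (hx : 0 < x) :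
    x ^ q ≤ ((Nat.ceil q).factorial : ℝ) * Real.exp x := by
  have hK1 : (1 : ℝ) ≤ ((Nat.ceil q).factorial : ℝ) := by
    exact_mod_cast Nat.one_le_iff_ne_zero.mpr (Nat.factorial_ne_zero _)
  rcases le_or_gt x 1 with h1 | h1
  · have : x ^ q ≤ 1 := Real.rpow_le_one hx.le h1 hq
    nlinarith [Real.exp_pos x, Real.add_one_le_exp x]
  · have h2 : x ^ q ≤ x ^ ((Nat.ceil q : ℝ)) :=
      Real.rpow_le_rpow_of_exponent_le h1.le (Nat.le_ceil q)
    rw [Real.rpow_natCast] at h2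
    have h3 : x ^ (Nat.ceil q) / ((Nat.ceil q).factorial : ℝ) ≤ Real.exp x := by
      refine le_trans ?_ (Real.sum_le_exp_of_nonneg hx.le (Nat.ceil q + 1))
      refine Finset.single_le_sum (f := fun i => x ^ i / (i.factorial : ℝ)) ?_ ?_
      · intro i _
        positivity
      · simp
    have hKpos : (0 : ℝ) < ((Nat.ceil q).factorial : ℝ) := by positivity
    calc x ^ q ≤ x ^ (Nat.ceil q) := h2
      _ = (x ^ (Nat.ceil q) / ((Nat.ceil q).factorial : ℝ)) * ((Nat.ceil q).factorial : ℝ) := by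
          field_simp
      _ ≤ Real.exp x * ((Nat.ceil q).factorial : ℝ) :=
          mul_le_mul_of_nonneg_right h3 hKpos.le
      _ = ((Nat.ceil q).factorial : ℝ) * Real.exp x := by ring

set_option maxHeartbeats 1000000 in
/-- **Lemma A.4.** Let `p ≥ 1`, `C > 0` and `ĥ(t) = t e^{-2 t^{-1/(2p)}}` (with
`ĥ(0) = 0`). There is `D > 0`, depending only on `p` and `C`, such that for every
`ε > 0` with `1 ≥ (-ln(C ε^{2/3}))^{-2p} ≥ ε` and every Borel probability measure `μ`
on `(0,1]` with `∫ ĥ((1 - ln λ)^{-2p}) dμ(λ) = C ε²`, one has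
`∫ (1 - ln λ)^{-2p} dμ(λ) ≤ D (-ln(ε^{2/3}))^{-2p}`. -/
theorem spectral_log_bound_from_h_integral
    (p C : ℝ) (hp : 1 ≤ p) (hC : 0 < C)
    (hh : ℝ → ℝ) (hh0 : hh 0 = 0)
    (hhdef : ∀ t : ℝ, 0 < t → hh t = t * Real.exp (-2 * t ^ (-(1 / (2 * p))))) :
    ∃ D > (0 : ℝ), ∀ ε : ℝ, 0 < ε →
      (-Real.log (C * ε ^ ((2 : ℝ) / 3))) ^ (-(2 * p)) ≤ 1 →
      ε ≤ (-Real.log (C * ε ^ ((2 : ℝ) / 3))) ^ (-(2 * p)) →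
      ∀ μ : Measure ℝ, IsProbabilityMeasure μ → μ (Set.Ioc (0 : ℝ) 1)ᶜ = 0 →
        (∫ l in Set.Ioc (0 : ℝ) 1, hh ((1 - Real.log l) ^ (-(2 * p))) ∂μ) = C * ε ^ 2 →
        (∫ l in Set.Ioc (0 : ℝ) 1, (1 - Real.log l) ^ (-(2 * p)) ∂μ) ≤
          D * (-Real.log (ε ^ ((2 : ℝ) / 3))) ^ (-(2 * p)) := by
  have hp0 : (0 : ℝ) < p := lt_of_lt_of_le one_pos hp
  have h2p : (0 : ℝ) < 2 * p := by linarith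
  have hexc : -(1 / (2 * p)) ≤ 0 := neg_nonpos_of_nonneg (le_of_lt (div_pos one_pos h2p))
  have hexc2 : -(2 * p) ≤ 0 := by linarith
  set L : ℝ := max (Real.log C) 0 with hLdef
  set K : ℝ := ((Nat.ceil (2 * p)).factorial : ℝ) with hKdef
  have hK1 : (1 : ℝ) ≤ K := by
    rw [hKdef]
    exact_mod_cast Nat.one_le_iff_ne_zero.mpr (Nat.factorial_ne_zero _)
  have hL0 : 0 ≤ L := le_max_right _ _
  have h1L : (0 : ℝ) < 1 + L := by linarith
  have h1Lp : (0 : ℝ) < (1 + L) ^ (2 * p) := Real.rpow_pos_of_pos h1L _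
  refine ⟨2 * (1 + L) ^ (2 * p) + K / C, by positivity, ?_⟩
  intro ε hε h1 h2 μ hprob hcompl hint
  set f : ℝ → ℝ := fun l => (1 - Real.log l) ^ (-(2 * p)) with hfdef
  set g : ℝ → ℝ := fun l => f l * Real.exp (-2 * (f l) ^ (-(1 / (2 * p)))) with hgdef
  set s : ℝ := -Real.log (C * ε ^ ((2 : ℝ) / 3)) with hsdef
  set x : ℝ := -Real.log (ε ^ ((2 : ℝ) / 3)) with hxdef
  set u : ℝ := ε ^ ((2 : ℝ) / 3) with hudef
  have hu0 : 0 < u := Real.rpow_pos_of_pos hε _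
  have ha0 : 0 < C * u := mul_pos hC hu0
  have hu3 : u ^ 3 = ε ^ 2 := by
    rw [hudef, ← Real.rpow_natCast (ε ^ ((2:ℝ)/3)) 3, ← Real.rpow_natCast ε 2,
      ← Real.rpow_mul hε.le]
    norm_num
  -- basic facts about f on (0,1]
  have hfpos : ∀ l ∈ Set.Ioc (0 : ℝ) 1, 0 < f l := by
    intro l hl
    have : Real.log l ≤ 0 := Real.log_nonpos hl.1.le hl.2
    exact Real.rpow_pos_of_pos (by linarith) _
  have hfle1 : ∀ l ∈ Set.Ioc (0 : ℝ) 1, f l ≤ 1 := by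
    intro l hl
    have : Real.log l ≤ 0 := Real.log_nonpos hl.1.le hl.2
    exact Real.rpow_le_one_of_one_le_of_nonpos (by linarith) hexc2
  have hgnonneg : ∀ l ∈ Set.Ioc (0 : ℝ) 1, 0 ≤ g l := by
    intro l hl
    exact mul_nonneg (hfpos l hl).le (Real.exp_pos _).le
  have hgle : ∀ l ∈ Set.Ioc (0 : ℝ) 1, g l ≤ Real.exp (-2) := by
    intro l hl
    have h1' : 1 ≤ (f l) ^ (-(1 / (2 * p))) :=
      Real.one_le_rpow_of_pos_of_le_one_of_nonpos (hfpos l hl) (hfle1 l hl) hexc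
    have hee : Real.exp (-2 * (f l) ^ (-(1 / (2 * p)))) ≤ Real.exp (-2) :=
      Real.exp_le_exp.mpr (by nlinarith)
    calc g l ≤ 1 * Real.exp (-2) :=
          mul_le_mul (hfle1 l hl) hee (Real.exp_pos _).le one_pos.le
      _ = Real.exp (-2) := one_mul _
  -- measurability and integrability
  have hfm : Measurable f := (measurable_const.sub Real.measurable_log).pow measurable_const
  have hgm : Measurable g :=
    hfm.mul ((measurable_const.mul (hfm.pow measurable_const)).exp)
  have hμIoc : μ (Set.Ioc (0 : ℝ) 1) = 1 := by
    have h := measure_add_measure_compl (μ := μ) (measurableSet_Ioc (a := (0:ℝ)) (b := 1))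
    rw [hcompl, add_zero, measure_univ] at h
    exact h
  have hfi : IntegrableOn f (Set.Ioc (0 : ℝ) 1) μ := by
    refine Integrable.mono' (integrable_const 1) hfm.aestronglyMeasurable.restrict ?_
    rw [ae_restrict_iff' measurableSet_Ioc]
    exact ae_of_all _ fun l hl => by
      rw [Real.norm_eq_abs, abs_of_pos (hfpos l hl)]; exact hfle1 l hl
  have hgi : IntegrableOn g (Set.Ioc (0 : ℝ) 1) μ := by
    refine Integrable.mono' (integrable_const 1) hgm.aestronglyMeasurable.restrict ?_
    rw [ae_restrict_iff' measurableSet_Ioc]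
    exact ae_of_all _ fun l hl => by
      rw [Real.norm_eq_abs, abs_of_nonneg (hgnonneg l hl)]
      calc g l ≤ Real.exp (-2) := hgle l hl
        _ ≤ 1 := Real.exp_le_one_iff.mpr (by norm_num)
  have hgint : ∫ l in Set.Ioc (0 : ℝ) 1, g l ∂μ = C * ε ^ 2 := by
    rw [← hint]
    exact setIntegral_congr_fun measurableSet_Ioc (fun l hl => (hhdef (f l) (hfpos l hl)).symm)
  -- C ε² ≤ e^{-2}
  have hCe2 : C * ε ^ 2 ≤ Real.exp (-2) := by
    rw [← hgint]
    calc ∫ l in Set.Ioc (0 : ℝ) 1, g l ∂μ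
        ≤ ∫ _ in Set.Ioc (0 : ℝ) 1, Real.exp (-2) ∂μ :=
          setIntegral_mono_on hgi (integrable_const _) measurableSet_Ioc hgle
      _ = Real.exp (-2) := by rw [setIntegral_const, measureReal_def, hμIoc]; simp
  -- ε < 1
  have hεle1 : ε ≤ 1 := le_trans h2 h1
  have hε1 : ε < 1 := by
    rcases lt_or_eq_of_le hεle1 with h | h
    · exact h
    · exfalso
      have hu1 : u = 1 := by rw [hudef, h, Real.one_rpow]
      have hC' : C ≤ Real.exp (-2) := by
        have h' := hCe2
        rw [h, one_pow, mul_one] at h'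
        exact h'
      have hlogC : Real.log C ≤ -2 := by
        calc Real.log C ≤ Real.log (Real.exp (-2)) := Real.log_le_log hC hC'
          _ = -2 := Real.log_exp _
      have hs2 : 2 ≤ s := by rw [hsdef, hu1, mul_one]; linarith
      have hs1 : (1 : ℝ) ≤ s := by linarith
      have ht1 : s ^ (-(2 * p)) ≤ s ^ (-(2 : ℝ)) :=
        Real.rpow_le_rpow_of_exponent_le hs1 (by nlinarith)
      have ht2 : s ^ (-(2 : ℝ)) = (s ^ 2)⁻¹ := by
        rw [Real.rpow_neg (by linarith), Real.rpow_two]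
      have hq : s ^ (-(2 * p)) ≤ (1 : ℝ) / 4 := by
        rw [ht2] at ht1
        have : (s ^ 2)⁻¹ ≤ ((2:ℝ) ^ 2)⁻¹ :=
          inv_anti₀ (by norm_num) (by nlinarith)
        calc s ^ (-(2 * p)) ≤ (s ^ 2)⁻¹ := ht1
          _ ≤ ((2:ℝ)^2)⁻¹ := this
          _ = 1 / 4 := by norm_num
      rw [h] at h2
      linarith
  have hx0 : 0 < x := by
    rw [hxdef]
    have hu1 : u < 1 := Real.rpow_lt_one hε.le hε1 (by norm_num)
    have := Real.log_neg hu0 hu1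
    linarith
  have hxp : 0 < x ^ (2 * p) := Real.rpow_pos_of_pos hx0 _
  have hxpn : 0 < x ^ (-(2 * p)) := Real.rpow_pos_of_pos hx0 _
  -- bound u ≤ K * x^{-(2p)}
  have hux : u ≤ K * x ^ (-(2 * p)) := by
    have hux' : u = Real.exp (-x) := by
      rw [hxdef, neg_neg, Real.exp_log hu0]
    have h3 : x ^ (2 * p) ≤ K * Real.exp x :=
      aux_rpow_le_factorial_mul_exp (2 * p) h2p.le hx0
    have hkey : Real.exp (-x) * x ^ (2 * p) ≤ K := by
      rw [Real.exp_neg, inv_mul_le_iff₀ (Real.exp_pos x)]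
      calc x ^ (2 * p) ≤ K * Real.exp x := h3
        _ = Real.exp x * K := mul_comm _ _
    rw [hux', Real.rpow_neg hx0.le]
    calc Real.exp (-x) = (Real.exp (-x) * x ^ (2 * p)) * (x ^ (2 * p))⁻¹ := by
          field_simp
      _ ≤ K * (x ^ (2 * p))⁻¹ := mul_le_mul_of_nonneg_right hkey (by positivity)
  -- relation x = s + log C
  have hxs : x = s + Real.log C := by
    rw [hxdef, hsdef, Real.log_mul hC.ne' hu0.ne']
    ring
  rcases lt_or_ge 0 s with hs | hs
  · -- main case: s > 0
    have hs1 : (1 : ℝ) ≤ s := by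
      by_contra hcon
      push_neg at hcon
      have : 1 < s ^ (-(2 * p)) :=
        (Real.one_lt_rpow_iff_of_pos hs).mpr (Or.inr ⟨hcon, by nlinarith⟩)
      linarith
    have ht0pos : 0 < s ^ (-(2 * p)) := Real.rpow_pos_of_pos hs _
    -- exp(-2s) = (Cu)^2
    have hexp2s : Real.exp (-2 * s) = (C * u) ^ 2 := by
      have h4 : (-2 : ℝ) * s = Real.log (C * u) + Real.log (C * u) := by
        rw [hsdef]; ring
      rw [h4, Real.exp_add, Real.exp_log ha0, sq]
    -- pointwise bound
    have hpt : ∀ l ∈ Set.Ioc (0 : ℝ) 1,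
        f l ≤ s ^ (-(2 * p)) + g l / (C * u) ^ 2 := by
      intro l hl
      rcases le_or_gt (f l) (s ^ (-(2 * p))) with h | h
      · have : 0 ≤ g l / (C * u) ^ 2 := div_nonneg (hgnonneg l hl) (by positivity)
        linarith
      · have hge : (f l) ^ (-(1 / (2 * p))) ≤ (s ^ (-(2 * p))) ^ (-(1 / (2 * p))) :=
          Real.rpow_le_rpow_of_nonpos ht0pos h.le hexc
        have hts : (s ^ (-(2 * p))) ^ (-(1 / (2 * p))) = s := by
          rw [← Real.rpow_mul hs.le]
          have he1 : -(2 * p) * -(1 / (2 * p)) = 1 := by field_simp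
          rw [he1, Real.rpow_one]
        rw [hts] at hge
        have hexpge : Real.exp (-2 * s) ≤ Real.exp (-2 * (f l) ^ (-(1 / (2 * p)))) :=
          Real.exp_le_exp.mpr (by nlinarith)
        have hgl : f l * (C * u) ^ 2 ≤ g l := by
          calc f l * (C * u) ^ 2 = f l * Real.exp (-2 * s) := by rw [hexp2s]
            _ ≤ f l * Real.exp (-2 * (f l) ^ (-(1 / (2 * p)))) :=
                mul_le_mul_of_nonneg_left hexpge (hfpos l hl).le
            _ = g l := rfl
        have ha2 : (0 : ℝ) < (C * u) ^ 2 := by positivity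
        have : f l ≤ g l / (C * u) ^ 2 := (le_div_iff₀ ha2).mpr hgl
        linarith
    -- integrate
    have hconsti : IntegrableOn (fun _ : ℝ => s ^ (-(2 * p))) (Set.Ioc (0 : ℝ) 1) μ :=
      integrable_const _
    have hrhsint : IntegrableOn (fun l => s ^ (-(2 * p)) + g l / (C * u) ^ 2)
        (Set.Ioc (0 : ℝ) 1) μ := hconsti.add (hgi.div_const _)
    have hmono : (∫ l in Set.Ioc (0 : ℝ) 1, f l ∂μ)
        ≤ ∫ l in Set.Ioc (0 : ℝ) 1, (s ^ (-(2 * p)) + g l / (C * u) ^ 2) ∂μ :=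
      setIntegral_mono_on hfi hrhsint measurableSet_Ioc hpt
    have hval : (∫ l in Set.Ioc (0 : ℝ) 1, (s ^ (-(2 * p)) + g l / (C * u) ^ 2) ∂μ)
        = s ^ (-(2 * p)) + (C * ε ^ 2) / (C * u) ^ 2 := by
      rw [integral_add hconsti (hgi.div_const _), setIntegral_const, measureReal_def, hμIoc,
        integral_div, hgint]
      simp
    have hsimp : (C * ε ^ 2) / (C * u) ^ 2 = u / C := by
      rw [← hu3]
      field_simp
    -- final bounds
    have hxls : x ≤ (1 + L) * s := by
      have hlogCL : Real.log C ≤ L := le_max_left _ _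
      have hLs : L ≤ L * s := le_mul_of_one_le_right hL0 hs1
      nlinarith
    have ht0x : s ^ (-(2 * p)) ≤ (1 + L) ^ (2 * p) * x ^ (-(2 * p)) := by
      have hsp : 0 < s ^ (2 * p) := Real.rpow_pos_of_pos hs _
      have hxsp : x ^ (2 * p) ≤ ((1 + L) * s) ^ (2 * p) :=
        Real.rpow_le_rpow hx0.le hxls h2p.le
      rw [Real.mul_rpow h1L.le hs.le] at hxsp
      rw [Real.rpow_neg hs.le, Real.rpow_neg hx0.le, ← div_eq_mul_inv, inv_eq_one_div,
        div_le_div_iff₀ hsp hxp]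
      nlinarith
    have huxC : u / C ≤ (K / C) * x ^ (-(2 * p)) := by
      rw [div_mul_eq_mul_div]
      gcongr
    calc (∫ l in Set.Ioc (0 : ℝ) 1, f l ∂μ)
        ≤ s ^ (-(2 * p)) + (C * ε ^ 2) / (C * u) ^ 2 := hmono.trans_eq hval
      _ = s ^ (-(2 * p)) + u / C := by rw [hsimp]
      _ ≤ (1 + L) ^ (2 * p) * x ^ (-(2 * p)) + (K / C) * x ^ (-(2 * p)) := by
          linarith
      _ = ((1 + L) ^ (2 * p) + K / C) * x ^ (-(2 * p)) := by ring
      _ ≤ (2 * (1 + L) ^ (2 * p) + K / C) * x ^ (-(2 * p)) :=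
          mul_le_mul_of_nonneg_right (by linarith) hxpn.le
  · -- degenerate case: s ≤ 0
    have hCu1 : 1 ≤ C * u := by
      have hlog : 0 ≤ Real.log (C * u) := by rw [hsdef] at hs; linarith
      calc (1 : ℝ) = Real.exp 0 := Real.exp_zero.symm
        _ ≤ Real.exp (Real.log (C * u)) := Real.exp_le_exp.mpr hlog
        _ = C * u := Real.exp_log ha0
    have hu2 : u ^ 2 ≤ Real.exp (-2) := by nlinarith
    have hue : u ≤ Real.exp (-1) := by
      have he : Real.exp (-1) * Real.exp (-1) = Real.exp (-2) := by
        rw [← Real.exp_add]; norm_num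
      nlinarith [Real.exp_pos (-1), hu0]
    have hx1 : (1 : ℝ) ≤ x := by
      have := Real.log_le_log hu0 hue
      rw [Real.log_exp] at this
      rw [hxdef]
      linarith
    have hxL : x ≤ L := by
      have h1C : (0:ℝ) < 1 / C := by positivity
      have h1Cu : 1 / C ≤ u := by rw [div_le_iff₀ hC]; nlinarith
      have := Real.log_le_log h1C h1Cu
      rw [one_div, Real.log_inv] at this
      have hlogCL : Real.log C ≤ L := le_max_left _ _
      rw [hxdef]
      linarith
    have hint1 : (∫ l in Set.Ioc (0 : ℝ) 1, f l ∂μ) ≤ 1 := by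
      calc (∫ l in Set.Ioc (0 : ℝ) 1, f l ∂μ)
          ≤ ∫ _ in Set.Ioc (0 : ℝ) 1, (1:ℝ) ∂μ :=
            setIntegral_mono_on hfi (integrable_const _) measurableSet_Ioc hfle1
        _ = 1 := by rw [setIntegral_const, measureReal_def, hμIoc]; simp
    have hbig : (1 : ℝ) ≤ (1 + L) ^ (2 * p) * x ^ (-(2 * p)) := by
      have hxsp : x ^ (2 * p) ≤ (1 + L) ^ (2 * p) :=
        Real.rpow_le_rpow hx0.le (by linarith) h2p.le
      have hone : x ^ (2 * p) * x ^ (-(2 * p)) = 1 := by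
        rw [← Real.rpow_add hx0]; simp
      calc (1:ℝ) = x ^ (2 * p) * x ^ (-(2 * p)) := hone.symm
        _ ≤ (1 + L) ^ (2 * p) * x ^ (-(2 * p)) :=
            mul_le_mul_of_nonneg_right hxsp hxpn.le
    have hKC : 0 < K / C := by positivity
    calc (∫ l in Set.Ioc (0 : ℝ) 1, f l ∂μ) ≤ 1 := hint1
      _ ≤ (1 + L) ^ (2 * p) * x ^ (-(2 * p)) := hbig
      _ ≤ (2 * (1 + L) ^ (2 * p) + K / C) * x ^ (-(2 * p)) :=
          mul_le_mul_of_nonneg_right (by linarith) hxpn.le
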